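/- Let n ≥ 2, κ > 0, set c_κ = Γ(nκ)/Γ(κ)ⁿ, and let f : ℝ → ℝ be continuously differentiable. Define H : ℝⁿ → ℝ by H(x) = n!·c_κ ∫_{T^{n−1}} f(Σ_{j=1}^n x_j t_j) · ∏_{j=1}^n t_j^{κ−1} dt₁⋯dt_{n−1}, where in the integrand tₙ denotes 1 − Σ_{j=1}^{n−1} t_j. Then H is invariant under all permutations of the coordinates of x, and for every i ∈ {1,…,n} and every x ∈ ℝⁿ, ∂_i H(x) = n!·c_κ ∫_{T^{n−1}} f'(Σ_{j=1}^n x_j t_j) · t_i · ∏_{j=1}^n t_j^{κ−1} dt₁⋯dt_{n−1}. -/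

import Mathlib

open Finset MeasureTheory

/-- The open unit simplex `Tᵐ ⊆ ℝᵐ`. -/
def unitSimplex (m : ℕ) : Set (Fin m → ℝ) :=
  {t | (∀ j, 0 < t j) ∧ ∑ j, t j < 1}

/-- Extend `t = (t₁,…,t_{n-1}) ∈ T^{n-1}` to `(t₁,…,t_{n-1},tₙ)` with
`tₙ = 1 - ∑_{j<n} t_j`. -/
noncomputable def tExt (n : ℕ) (t : Fin (n - 1) → ℝ) : Fin n → ℝ := fun j =>
  if h : (j : ℕ) < n - 1 then t ⟨j, h⟩ else 1 - ∑ i, t i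

/-- The intertwining operator applied to the symmetrized function
`F(x) = ∑_{σ∈Sₙ} f(x_{σ(1)})`:
`H(x) = n! c_κ ∫_{T^{n-1}} f(∑ xⱼtⱼ) ∏ tⱼ^{κ-1} dt`. -/
noncomputable def xuH (n : ℕ) (κ : ℝ) (f : ℝ → ℝ) (x : Fin n → ℝ) : ℝ :=
  (n.factorial : ℝ) * (Real.Gamma ((n : ℝ) * κ) / (Real.Gamma κ) ^ n) *
    ∫ t in unitSimplex (n - 1),
      f (∑ j, x j * tExt n t j) * ∏ j, (tExt n t j) ^ (κ - 1)

section Aux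
open Set

lemma rpow_bdd_ae {a b p C : ℝ} (hC : ∀ y ∈ Set.Ioc a b, |y ^ p| ≤ C) :
    ∀ᵐ y ∂(volume.restrict (Set.Ioc a b)), ‖y ^ p‖ ≤ C := by
  refine (ae_restrict_iff' measurableSet_Ioc).2 (Filter.Eventually.of_forall fun y hy => ?_)
  simpa [Real.norm_eq_abs] using hC y hy

lemma integrableOn_beta {p q : ℝ} (hp : -1 < p) (hq : -1 < q) :
    IntegrableOn (fun y : ℝ => y ^ p * (1 - y) ^ q) (Set.Ioo 0 1) := by
  have hmeas : Measurable fun y : ℝ => (1 - y) ^ q :=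
    by fun_prop
  have hmeas' : Measurable fun y : ℝ => y ^ p := by fun_prop
  have h1 : IntegrableOn (fun y : ℝ => y ^ p * (1 - y) ^ q) (Set.Ioc 0 2⁻¹) := by
    have hbase : IntegrableOn (fun y : ℝ => y ^ p) (Set.Ioc 0 2⁻¹) :=
      (intervalIntegrable_iff_integrableOn_Ioc_of_le (by norm_num)).1
        (intervalIntegral.intervalIntegrable_rpow' hp)
    have hb : ∀ᵐ y ∂(volume.restrict (Set.Ioc (0:ℝ) 2⁻¹)),
        ‖(1 - y) ^ q‖ ≤ max 1 ((2⁻¹ : ℝ) ^ q) := by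
      refine (ae_restrict_iff' measurableSet_Ioc).2 (Filter.Eventually.of_forall fun y hy => ?_)
      have h2 : (2⁻¹ : ℝ) ≤ 1 - y := by linarith [hy.2]
      have h0 : (0:ℝ) < 1 - y := by linarith
      rw [Real.norm_eq_abs, abs_of_nonneg (Real.rpow_nonneg h0.le q)]
      rcases le_or_gt 0 q with hq0 | hq0
      · exact le_max_of_le_left (Real.rpow_le_one h0.le (by linarith [hy.1]) hq0)
      · exact le_max_of_le_right (Real.rpow_le_rpow_of_nonpos (by norm_num) h2 hq0.le)
    have := (Integrable.bdd_mul hbase (c := max 1 ((2⁻¹ : ℝ) ^ q)) hmeas.aestronglyMeasurable hb)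
    simpa [mul_comm, IntegrableOn] using this
  have h2 : IntegrableOn (fun y : ℝ => y ^ p * (1 - y) ^ q) (Set.Ioc 2⁻¹ 1) := by
    have hbase : IntegrableOn (fun y : ℝ => (1 - y) ^ q) (Set.Ioc 2⁻¹ 1) := by
      have := ((intervalIntegral.intervalIntegrable_rpow' hq (a := 0) (b := 2⁻¹)).comp_sub_left 1).symm
      rw [show (1:ℝ) - 0 = 1 by norm_num, show (1:ℝ) - 2⁻¹ = 2⁻¹ by norm_num] at this
      exact (intervalIntegrable_iff_integrableOn_Ioc_of_le (by norm_num)).1 this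
    have hb : ∀ᵐ y ∂(volume.restrict (Set.Ioc (2⁻¹:ℝ) 1)),
        ‖y ^ p‖ ≤ max 1 ((2⁻¹ : ℝ) ^ p) := by
      refine (ae_restrict_iff' measurableSet_Ioc).2 (Filter.Eventually.of_forall fun y hy => ?_)
      have h0 : (0:ℝ) < y := lt_of_lt_of_le (by norm_num) hy.1.le
      rw [Real.norm_eq_abs, abs_of_nonneg (Real.rpow_nonneg h0.le p)]
      rcases le_or_gt 0 p with hp0 | hp0
      · exact le_max_of_le_left (Real.rpow_le_one h0.le hy.2 hp0)
      · exact le_max_of_le_right (Real.rpow_le_rpow_of_nonpos (by norm_num) hy.1.le hp0.le)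
    exact Integrable.bdd_mul hbase (c := max 1 ((2⁻¹ : ℝ) ^ p)) hmeas'.aestronglyMeasurable hb
  exact (h1.union h2).mono_set (by
    intro y hy
    rcases le_or_gt y 2⁻¹ with h | h
    · exact Or.inl ⟨hy.1, h⟩
    · exact Or.inr ⟨h, hy.2.le⟩)

noncomputable def betaConst (a b : ℝ) : ℝ := ∫ y in Set.Ioo (0:ℝ) 1, y ^ (a-1) * (1 - y) ^ (b-1)


lemma beta_scaled {a b c : ℝ} (ha : 0 < a) (hb : 0 < b) (hc : 0 < c) :
    IntegrableOn (fun y : ℝ => y ^ (a-1) * (c - y) ^ (b-1)) (Set.Ioo 0 c) ∧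
      ∫ y in Set.Ioo 0 c, y ^ (a-1) * (c - y) ^ (b-1)
        = c ^ (a+b-1) * betaConst a b := by
  set g : ℝ → ℝ := fun y => y ^ (a-1) * (c - y) ^ (b-1) with hg
  have h₁ : Set.EqOn (fun x => g (c*x))
      (fun x : ℝ => c ^ (a+b-2) * (x ^ (a-1) * (1-x) ^ (b-1))) (Set.Ioo 0 1) := by
    intro x hx
    have hx0 : (0:ℝ) ≤ x := hx.1.le
    have hx1 : (0:ℝ) ≤ 1 - x := by linarith [hx.2]
    simp only [hg]
    have e1 : (c * x) ^ (a-1) = c ^ (a-1) * x ^ (a-1) := Real.mul_rpow hc.le hx0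
    have e2 : (c - c * x) ^ (b-1) = c ^ (b-1) * (1-x) ^ (b-1) := by
      rw [show c - c * x = c * (1-x) by ring, Real.mul_rpow hc.le hx1]
    rw [e1, e2, show c ^ (a+b-2) = c ^ (a-1) * c ^ (b-1) by
      rw [← Real.rpow_add hc]; ring_nf]
    ring
  have hbeta := integrableOn_beta (by linarith : (-1:ℝ) < a - 1) (by linarith : (-1:ℝ) < b - 1)
  have hInt1 : IntegrableOn (fun x => g (c*x)) (Set.Ioo 0 1) :=
    IntegrableOn.congr_fun (hbeta.const_mul (c ^ (a+b-2))) (fun x hx => (h₁ hx).symm)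
      measurableSet_Ioo
  have hIntg : IntegrableOn g (Set.Ioo 0 c) := by
    have h2 : IntervalIntegrable (fun x => g (c*x)) volume 0 1 := by
      rw [intervalIntegrable_iff_integrableOn_Ioc_of_le zero_le_one,
        integrableOn_Ioc_iff_integrableOn_Ioo]
      exact hInt1
    have h3 : IntervalIntegrable g volume 0 c := by
      apply (IntervalIntegrable.comp_mul_left_iff (f := g) (a := 0) (b := c) hc.ne').1
      simpa [hc.ne'] using h2
    rw [intervalIntegrable_iff_integrableOn_Ioc_of_le hc.le,
      integrableOn_Ioc_iff_integrableOn_Ioo] at h3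
    exact h3
  refine ⟨hIntg, ?_⟩
  have e3 : ∫ y in Set.Ioo 0 c, g y = ∫ y in (0:ℝ)..c, g y := by
    rw [intervalIntegral.integral_of_le hc.le, integral_Ioc_eq_integral_Ioo]
  have e4 : ∫ x in (0:ℝ)..1, g (c * x) = c⁻¹ • ∫ y in (0:ℝ)..c, g y := by
    simpa using intervalIntegral.integral_comp_mul_left (a := 0) (b := 1) g hc.ne'
  have e5 : ∫ x in (0:ℝ)..1, g (c * x) = c ^ (a+b-2) * betaConst a b := by
    rw [intervalIntegral.integral_of_le zero_le_one, integral_Ioc_eq_integral_Ioo]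
    rw [setIntegral_congr_fun measurableSet_Ioo h₁, MeasureTheory.integral_const_mul]
    rfl
  have : ∫ y in (0:ℝ)..c, g y = c * (c ^ (a+b-2) * betaConst a b) := by
    rw [← e5, e4, smul_eq_mul]
    field_simp
  have hcc : c * c ^ (a+b-2) = c ^ (a+b-1) := by
    have h := (Real.rpow_add hc 1 (a+b-2)).symm
    rw [Real.rpow_one, show (1:ℝ)+(a+b-2) = a+b-1 by ring] at h
    exact h
  rw [e3, this, ← mul_assoc, hcc]



lemma measurableSet_unitSimplex (m : ℕ) : MeasurableSet (unitSimplex m) := by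
  have : unitSimplex m = (⋂ j, {t : Fin m → ℝ | 0 < t j}) ∩ {t | ∑ j, t j < 1} := by
    ext t; simp [unitSimplex, Set.mem_iInter]
  rw [this]
  exact (MeasurableSet.iInter fun j =>
    measurableSet_lt measurable_const (measurable_pi_apply j)).inter
    (measurableSet_lt (by fun_prop) measurable_const)

example (m : ℕ) (a : Fin m → ℝ) : Measurable fun t : Fin m → ℝ => (∏ j, (t j) ^ (a j - 1)) := by
  fun_prop

lemma dirichlet_integrable :
    ∀ (m : ℕ) (a : Fin m → ℝ), (∀ j, 0 < a j) → ∀ (b : ℝ), 0 < b →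
      IntegrableOn
        (fun t : Fin m → ℝ => (∏ j, (t j) ^ (a j - 1)) * (1 - ∑ j, t j) ^ (b - 1))
        (unitSimplex m) := by
  intro m
  induction m with
  | zero =>
    intro a ha b hb
    set f : (Fin 0 → ℝ) → ℝ :=
      fun t => (∏ j, (t j) ^ (a j - 1)) * (1 - ∑ j, t j) ^ (b - 1) with hf
    have hconst : f = fun _ => f (fun i => i.elim0) := by
      funext x; congr 1; exact Subsingleton.elim _ _
    have hμ : volume (unitSimplex 0) < ⊤ := by
      calc volume (unitSimplex 0) ≤ volume (Set.univ : Set (Fin 0 → ℝ)) :=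
            measure_mono (Set.subset_univ _)
        _ = 1 := by
            rw [MeasureTheory.volume_pi, MeasureTheory.Measure.pi_univ]
            simp
        _ < ⊤ := by norm_num
    rw [hconst]
    exact integrableOn_const hμ.ne
  | succ m ih =>
    intro a ha b hb
    classical
    set T : (Fin (m+1) → ℝ) → ℝ :=
      fun t => (∏ j, (t j) ^ (a j - 1)) * (1 - ∑ j, t j) ^ (b - 1) with hT
    set e := MeasurableEquiv.piFinSuccAbove (fun _ : Fin (m+1) => ℝ) (Fin.last m) with he
    have hmp : MeasurePreserving e.symm volume volume :=
      (volume_preserving_piFinSuccAbove (fun _ : Fin (m+1) => ℝ) (Fin.last m)).symm e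
    -- the transported function
    set c : (Fin m → ℝ) → ℝ := fun s => 1 - ∑ j, s j with hc
    set A : Set (ℝ × (Fin m → ℝ)) :=
      {p | p.2 ∈ unitSimplex m ∧ p.1 ∈ Set.Ioo 0 (c p.2)} with hA
    set B : ℝ × (Fin m → ℝ) → ℝ := fun p =>
      (∏ j, (p.2 j) ^ (a (Fin.castSucc j) - 1)) *
        ((p.1) ^ (a (Fin.last m) - 1) * (c p.2 - p.1) ^ (b - 1)) with hB
    have hsymm : ∀ (y : ℝ) (s : Fin m → ℝ), e.symm (y, s) = Fin.snoc s y := by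
      intro y s
      ext k
      simp [he, MeasurableEquiv.piFinSuccAbove, Fin.insertNthEquiv, Fin.insertNth_last']
    have hGG : (Set.indicator (unitSimplex (m+1)) T) ∘ e.symm = Set.indicator A B := by
      funext p
      obtain ⟨y, s⟩ := p
      have hcoord_c : ∀ j : Fin m, (Fin.snoc s y : Fin (m+1) → ℝ) (Fin.castSucc j) = s j :=
        fun j => Fin.snoc_castSucc ..
      have hcoord_l : (Fin.snoc s y : Fin (m+1) → ℝ) (Fin.last m) = y := Fin.snoc_last ..
      have hsum : ∑ k, (Fin.snoc s y : Fin (m+1) → ℝ) k = (∑ j, s j) + y := by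
        rw [Fin.sum_univ_castSucc]
        simp [hcoord_c, hcoord_l]
      have hmem : (Fin.snoc s y : Fin (m+1) → ℝ) ∈ unitSimplex (m+1) ↔ (y, s) ∈ A := by
        constructor
        · rintro ⟨hpos, hlt⟩
          rw [hsum] at hlt
          refine ⟨⟨fun j => by simpa [hcoord_c] using hpos (Fin.castSucc j), ?_⟩, ?_, ?_⟩
          · have := hpos (Fin.last m); rw [hcoord_l] at this; linarith
          · simpa [hcoord_l] using hpos (Fin.last m)
          · simp only [hc]; linarith
        · rintro ⟨⟨hpos, _⟩, hy0, hy1⟩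
          simp only [hc, Set.mem_Ioo] at hy1 ⊢
          refine ⟨fun k => ?_, ?_⟩
          · refine Fin.lastCases ?_ ?_ k
            · rw [hcoord_l]; exact hy0
            · intro j; rw [hcoord_c]; exact hpos j
          · rw [hsum]; linarith
      have hval : T (Fin.snoc s y) = B (y, s) := by
        simp only [hT, hB]
        rw [Fin.prod_univ_castSucc]
        simp only [hcoord_c, hcoord_l, hsum, hc]
        rw [show (1:ℝ) - ((∑ j, s j) + y) = (1 - ∑ j, s j) - y by ring]
        ring
      simp only [Function.comp_apply, hsymm]
      by_cases hm : (Fin.snoc s y : Fin (m+1) → ℝ) ∈ unitSimplex (m+1)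
      · rw [Set.indicator_of_mem hm, Set.indicator_of_mem (hmem.1 hm), hval]
      · rw [Set.indicator_of_notMem hm, Set.indicator_of_notMem (fun h => hm (hmem.2 h))]
    -- integrability of the transported function via Fubini
    have hAmeas : MeasurableSet A := by
      have : A = (Prod.snd ⁻¹' unitSimplex m) ∩
          ({p : ℝ × (Fin m → ℝ) | 0 < p.1} ∩ {p : ℝ × (Fin m → ℝ) | p.1 < c p.2}) := by
        ext p; simp [hA, Set.mem_Ioo, and_assoc]
      rw [this]
      refine ((measurableSet_unitSimplex m).preimage measurable_snd).inter
        ((measurableSet_lt measurable_const measurable_fst).inter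
          (measurableSet_lt measurable_fst (by fun_prop)))
    have hBmeas : Measurable B := by fun_prop
    have hG'meas : AEStronglyMeasurable (Set.indicator A B) (volume.prod volume) :=
      (hBmeas.indicator hAmeas).aestronglyMeasurable
    have key : Integrable (Set.indicator A B) ((volume : Measure ℝ).prod volume) := by
      rw [integrable_prod_iff' hG'meas]
      constructor
      · refine Filter.Eventually.of_forall (fun s => ?_)
        by_cases hs : s ∈ unitSimplex m
        · have hcs : 0 < c s := by simp only [hc]; linarith [hs.2]
          have hslice : (fun y => Set.indicator A B (y, s)) =
              Set.indicator (Set.Ioo 0 (c s)) (fun y =>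
                (∏ j, (s j) ^ (a (Fin.castSucc j) - 1)) *
                  (y ^ (a (Fin.last m) - 1) * (c s - y) ^ (b - 1))) := by
            funext y
            by_cases hy : y ∈ Set.Ioo 0 (c s)
            · rw [Set.indicator_of_mem (show (y,s) ∈ A from ⟨hs, hy⟩),
                Set.indicator_of_mem hy]
            · rw [Set.indicator_of_notMem (fun h => hy h.2),
                Set.indicator_of_notMem hy]
          rw [hslice, integrable_indicator_iff measurableSet_Ioo]
          exact ((beta_scaled (ha (Fin.last m)) hb hcs).1.const_mul _)
        · have hslice : (fun y => Set.indicator A B (y, s)) = fun _ => 0 := by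
            funext y
            exact Set.indicator_of_notMem (fun h => hs h.1) _
          rw [hslice]
          exact integrable_zero _ _ _
      · have hnorm : (fun s => ∫ y, ‖Set.indicator A B (y, s)‖) =
            Set.indicator (unitSimplex m) (fun s => betaConst (a (Fin.last m)) b *
              ((∏ j, (s j) ^ (a (Fin.castSucc j) - 1)) *
                (1 - ∑ j, s j) ^ ((a (Fin.last m) + b) - 1))) := by
          funext s
          by_cases hs : s ∈ unitSimplex m
          · have hcs : 0 < c s := by simp only [hc]; linarith [hs.2]
            have h1 : ∀ y, ‖Set.indicator A B (y, s)‖ =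
                Set.indicator (Set.Ioo 0 (c s)) (fun y =>
                  (∏ j, (s j) ^ (a (Fin.castSucc j) - 1)) *
                    (y ^ (a (Fin.last m) - 1) * (c s - y) ^ (b - 1))) y := by
              intro y
              by_cases hy : y ∈ Set.Ioo 0 (c s)
              · rw [Set.indicator_of_mem (show (y,s) ∈ A from ⟨hs, hy⟩),
                  Set.indicator_of_mem hy]
                have h2 : (0:ℝ) ≤ B (y, s) := by
                  apply mul_nonneg
                  · exact Finset.prod_nonneg fun j _ => Real.rpow_nonneg (hs.1 j).le _
                  · exact mul_nonneg (Real.rpow_nonneg hy.1.le _)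
                      (Real.rpow_nonneg (by linarith [hy.2] : (0:ℝ) ≤ c s - y) _)
                rw [Real.norm_eq_abs, abs_of_nonneg h2]
              · rw [Set.indicator_of_notMem (fun h => hy h.2),
                  Set.indicator_of_notMem hy]
                simp
            rw [show (∫ y, ‖Set.indicator A B (y, s)‖) = ∫ y, Set.indicator (Set.Ioo 0 (c s))
                (fun y => (∏ j, (s j) ^ (a (Fin.castSucc j) - 1)) *
                  (y ^ (a (Fin.last m) - 1) * (c s - y) ^ (b - 1))) y from
              congrArg _ (funext h1)]
            rw [MeasureTheory.integral_indicator measurableSet_Ioo]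
            rw [MeasureTheory.integral_const_mul]
            rw [(beta_scaled (ha (Fin.last m)) hb hcs).2]
            rw [Set.indicator_of_mem hs]
            simp only [hc]
            ring
          · rw [Set.indicator_of_notMem hs]
            have h1 : ∀ y, Set.indicator A B (y, s) = 0 :=
              fun y => Set.indicator_of_notMem (fun h => hs h.1) _
            simp [h1]
        rw [hnorm, integrable_indicator_iff (measurableSet_unitSimplex m)]
        have := (ih (fun j => a (Fin.castSucc j)) (fun j => ha _)
          (a (Fin.last m) + b) (by linarith [ha (Fin.last m)])).const_mul
          (betaConst (a (Fin.last m)) b)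
        simpa [mul_assoc, IntegrableOn] using this
    -- transfer back
    have : Integrable ((Set.indicator (unitSimplex (m+1)) T) ∘ e.symm)
        ((volume : Measure ℝ).prod volume) := by rw [hGG]; exact key
    have h2 := (hmp.integrable_comp_emb e.symm.measurableEmbedding).1 this
    rwa [integrable_indicator_iff (measurableSet_unitSimplex (m+1))] at h2



lemma tExt_castSucc (m : ℕ) (t : Fin (m + 1 - 1) → ℝ) (j : Fin m) :
    tExt (m + 1) t (Fin.castSucc j) = t j := by
  simp [tExt]

lemma tExt_last (m : ℕ) (t : Fin (m + 1 - 1) → ℝ) :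
    tExt (m + 1) t (Fin.last m) = 1 - ∑ i, t i := by
  simp [tExt]

lemma tExt_sum (m : ℕ) (t : Fin (m + 1 - 1) → ℝ) :
    ∑ j, tExt (m + 1) t j = 1 := by
  rw [Fin.sum_univ_castSucc]
  simp [tExt_castSucc, tExt_last]

lemma tExt_pos {m : ℕ} {t : Fin (m + 1 - 1) → ℝ} (ht : t ∈ unitSimplex m) :
    ∀ j, 0 < tExt (m + 1) t j := by
  intro j
  refine Fin.lastCases ?_ ?_ j
  · rw [tExt_last]
    have h2 : (∑ i : Fin (m + 1 - 1), t i) < 1 := ht.2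
    linarith
  · intro k; rw [tExt_castSucc]; exact ht.1 k

lemma tExt_prod_eq (m : ℕ) (κ : ℝ) (t : Fin (m + 1 - 1) → ℝ) :
    ∏ j, (tExt (m + 1) t j) ^ (κ - 1)
      = (∏ j, (t j) ^ ((fun _ : Fin m => κ) j - 1)) * (1 - ∑ j, t j) ^ (κ - 1) := by
  rw [Fin.prod_univ_castSucc]
  simp [tExt_castSucc, tExt_last]

lemma W_integrable (m : ℕ) {κ : ℝ} (hκ : 0 < κ) :
    IntegrableOn (fun t : Fin (m + 1 - 1) → ℝ => ∏ j, (tExt (m + 1) t j) ^ (κ - 1))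
      (unitSimplex m) := by
  have := dirichlet_integrable m (fun _ => κ) (fun _ => hκ) κ hκ
  exact this.congr_fun (fun t _ => (tExt_prod_eq m κ t).symm) (measurableSet_unitSimplex m)

noncomputable def Amap (m : ℕ) (a : Fin m) : (Fin m → ℝ) → (Fin m → ℝ) :=
  fun t => Function.update t a (1 - ∑ j, t j)

lemma Amap_sum (m : ℕ) (a : Fin m) (t : Fin m → ℝ) :
    ∑ j, Amap m a t j = 1 - t a := by
  classical
  rw [show (∑ j, Amap m a t j) = ∑ j, Function.update t a (1 - ∑ j, t j) j from rfl,
    Finset.sum_update_of_mem (Finset.mem_univ a)]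
  have : ∑ j ∈ Finset.univ \ {a}, t j = (∑ j, t j) - t a := by
    rw [Finset.sum_sdiff_eq_sub (Finset.singleton_subset_iff.2 (Finset.mem_univ a))]
    simp
  rw [this]
  ring

lemma Amap_invol (m : ℕ) (a : Fin m) (t : Fin m → ℝ) :
    Amap m a (Amap m a t) = t := by
  classical
  have hs : (∑ j, Function.update t a (1 - ∑ j, t j) j) = 1 - t a := by
    have := Amap_sum m a t; simpa [Amap] using this
  show Function.update (Function.update t a (1 - ∑ j, t j)) a
      (1 - ∑ j, Function.update t a (1 - ∑ j, t j) j) = t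
  rw [hs, show (1:ℝ) - (1 - t a) = t a by ring, Function.update_idem,
    Function.update_eq_self]

lemma Amap_tExt (m : ℕ) (a : Fin m) (t : Fin (m + 1 - 1) → ℝ) :
    tExt (m + 1) (Amap m a t)
      = tExt (m + 1) t ∘ Equiv.swap (Fin.castSucc a) (Fin.last m) := by
  classical
  funext k
  have hal : Fin.castSucc a ≠ Fin.last m := (Fin.castSucc_lt_last a).ne
  refine Fin.lastCases ?_ ?_ k
  · rw [Function.comp_apply, Equiv.swap_apply_right, tExt_last, tExt_castSucc]
    show 1 - ∑ i : Fin m, Amap m a t i = t a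
    rw [Amap_sum]
    ring
  · intro j
    rw [Function.comp_apply, tExt_castSucc]
    by_cases hj : j = a
    · subst hj
      rw [Equiv.swap_apply_left, tExt_last]
      show Function.update t j (1 - ∑ i, t i) j = _
      rw [Function.update_self]
    · have : Equiv.swap (Fin.castSucc a) (Fin.last m) (Fin.castSucc j) = Fin.castSucc j :=
        Equiv.swap_apply_of_ne_of_ne (by simpa using hj) (Fin.castSucc_lt_last j).ne
      rw [this, tExt_castSucc]
      show Function.update t a (1 - ∑ i, t i) j = t j
      rw [Function.update_of_ne hj]

lemma Amap_mem {m : ℕ} (a : Fin m) {t : Fin m → ℝ} (ht : t ∈ unitSimplex m) :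
    Amap m a t ∈ unitSimplex m := by
  classical
  constructor
  · intro j
    by_cases hj : j = a
    · subst hj
      show 0 < Function.update t j (1 - ∑ i, t i) j
      rw [Function.update_self]
      linarith [ht.2]
    · show 0 < Function.update t a (1 - ∑ i, t i) j
      rw [Function.update_of_ne hj]
      exact ht.1 j
  · rw [Amap_sum]
    linarith [ht.1 a]

lemma Amap_preimage (m : ℕ) (a : Fin m) :
    Amap m a ⁻¹' unitSimplex m = unitSimplex m := by
  ext t
  constructor
  · intro h
    have := Amap_mem a h
    rwa [Amap_invol] at this
  · exact fun h => Amap_mem a h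

lemma Amap_continuous (m : ℕ) (a : Fin m) : Continuous (Amap m a) := by
  apply continuous_pi
  intro j
  by_cases hj : j = a
  · subst hj
    simp only [Amap]
    have : (fun t : Fin m → ℝ => Function.update t j (1 - ∑ i, t i) j)
        = fun t : Fin m → ℝ => 1 - ∑ i, t i := by
      funext t; rw [Function.update_self]
    rw [this]
    fun_prop
  · simp only [Amap]
    have : (fun t : Fin m → ℝ => Function.update t a (1 - ∑ i, t i) j)
        = fun t : Fin m → ℝ => t j := by
      funext t; rw [Function.update_of_ne hj]
    rw [this]
    fun_prop

lemma Amap_measurePreserving (m : ℕ) (a : Fin m) :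
    MeasurePreserving (Amap m a) volume volume := by
  classical
  set M : Matrix (Fin m) (Fin m) ℝ :=
    1 + Matrix.replicateCol Unit (fun i => if i = a then (-1 : ℝ) else 0) *
      Matrix.replicateRow Unit (fun j => if j = a then (2 : ℝ) else 1) with hM
  have hdet : M.det = -1 := by
    rw [hM, Matrix.det_one_add_replicateCol_mul_replicateRow, dotProduct]
    rw [Finset.sum_eq_single a]
    · norm_num
    · intro b _ hb; simp [hb]
    · intro h; exact absurd (Finset.mem_univ a) h
  have hMentry : ∀ i j, M i j = (if i = j then (1:ℝ) else 0) +
      (if i = a then (-1:ℝ) else 0) * (if j = a then (2:ℝ) else 1) := by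
    intro i j
    simp [hM, Matrix.add_apply, Matrix.one_apply, Matrix.mul_apply,
      Matrix.replicateCol_apply, Matrix.replicateRow_apply]
  have hrow_a : ∀ j, M a j = -1 := by
    intro j
    rw [hMentry]
    rcases eq_or_ne a j with h | h
    · subst h; norm_num
    · rw [if_neg h, if_neg (Ne.symm h)]; norm_num
  have hrow_i : ∀ i, i ≠ a → ∀ j, M i j = if i = j then (1:ℝ) else 0 := by
    intro i hi j
    rw [hMentry, if_neg hi]
    ring
  have hL : ⇑(Matrix.toLin' M) = fun t : Fin m → ℝ => Function.update t a (- ∑ j, t j) := by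
    funext t
    funext i
    rw [Matrix.toLin'_apply]
    show dotProduct (M i) t = _
    rw [dotProduct]
    by_cases hi : i = a
    · subst hi
      rw [Function.update_self]
      rw [Finset.sum_congr rfl (fun j _ => by rw [hrow_a j])]
      simp
    · rw [Function.update_of_ne hi]
      rw [Finset.sum_congr rfl (fun j _ => by rw [hrow_i i hi j])]
      simp [ite_mul]
  have hdet' : LinearMap.det (Matrix.toLin' M) = -1 := by
    rw [LinearMap.det_toLin']; exact hdet
  have hmap : Measure.map (⇑(Matrix.toLin' M)) volume = volume := by
    rw [Real.map_linearMap_volume_pi_eq_smul_volume_pi (by rw [hdet']; norm_num)]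
    rw [hdet']
    norm_num
  have hLmp : MeasurePreserving (⇑(Matrix.toLin' M)) volume volume :=
    ⟨(Matrix.toLin' M).continuous_of_finiteDimensional.measurable, hmap⟩
  have hcomp : Amap m a = (fun v : Fin m → ℝ => v + Pi.single a 1) ∘ ⇑(Matrix.toLin' M) := by
    funext t
    funext i
    simp only [Amap, Function.comp_apply, hL, Pi.add_apply]
    by_cases hi : i = a
    · subst hi
      rw [Function.update_self, Function.update_self, Pi.single_eq_same]
      ring
    · rw [Function.update_of_ne hi, Function.update_of_ne hi, Pi.single_eq_of_ne hi]
      ring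
  rw [hcomp]
  exact (measurePreserving_add_right volume (Pi.single a 1)).comp hLmp

noncomputable def AmapHomeo (m : ℕ) (a : Fin m) : (Fin m → ℝ) ≃ₜ (Fin m → ℝ) where
  toFun := Amap m a
  invFun := Amap m a
  left_inv := Amap_invol m a
  right_inv := Amap_invol m a
  continuous_toFun := Amap_continuous m a
  continuous_invFun := Amap_continuous m a

lemma setIntegral_Amap (m : ℕ) (a : Fin m) (g : (Fin m → ℝ) → ℝ) :
    ∫ t in unitSimplex m, g (Amap m a t) = ∫ t in unitSimplex m, g t := by
  have := (Amap_measurePreserving m a).setIntegral_preimage_emb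
    ((AmapHomeo m a).measurableEmbedding) g (unitSimplex m)
  rwa [show Amap m a ⁻¹' unitSimplex m = unitSimplex m from Amap_preimage m a] at this

lemma xuH_swap_last (m : ℕ) (κ : ℝ) (f : ℝ → ℝ) (a : Fin m) (x : Fin (m+1) → ℝ) :
    xuH (m+1) κ f (x ∘ Equiv.swap (Fin.castSucc a) (Fin.last m)) = xuH (m+1) κ f x := by
  unfold xuH
  congr 1
  set σ := Equiv.swap (Fin.castSucc a) (Fin.last m) with hσ
  have key : ∀ t : Fin (m+1-1) → ℝ,
      f (∑ j, (x ∘ σ) j * tExt (m+1) (Amap m a t) j) *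
          ∏ j, (tExt (m+1) (Amap m a t) j) ^ (κ-1)
        = f (∑ j, x j * tExt (m+1) t j) * ∏ j, (tExt (m+1) t j) ^ (κ-1) := by
    intro t
    rw [Amap_tExt]
    have h1 : ∑ j, (x ∘ σ) j * (tExt (m+1) t ∘ σ) j = ∑ j, x j * tExt (m+1) t j := by
      simpa using Equiv.sum_comp σ (fun k => x k * tExt (m+1) t k)
    have h2 : ∏ j, ((tExt (m+1) t ∘ σ) j) ^ (κ-1) = ∏ j, (tExt (m+1) t j) ^ (κ-1) := by
      simpa using Equiv.prod_comp σ (fun k => (tExt (m+1) t k) ^ (κ-1))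
    rw [h1, h2]
  have step := setIntegral_Amap m a
    (fun t => f (∑ j, (x ∘ σ) j * tExt (m+1) t j) * ∏ j, (tExt (m+1) t j) ^ (κ-1))
  calc ∫ t in unitSimplex (m+1-1),
        f (∑ j, (x ∘ σ) j * tExt (m+1) t j) * ∏ j, (tExt (m+1) t j) ^ (κ-1)
      = ∫ t in unitSimplex m,
          f (∑ j, (x ∘ σ) j * tExt (m+1) (Amap m a t) j) *
            ∏ j, (tExt (m+1) (Amap m a t) j) ^ (κ-1) := step.symm
    _ = ∫ t in unitSimplex (m+1-1),
          f (∑ j, x j * tExt (m+1) t j) * ∏ j, (tExt (m+1) t j) ^ (κ-1) := by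
        exact setIntegral_congr_fun (measurableSet_unitSimplex m) (fun t _ => key t)

lemma xuH_perm (m : ℕ) (κ : ℝ) (f : ℝ → ℝ) :
    ∀ (σ : Equiv.Perm (Fin (m+1))) (x : Fin (m+1) → ℝ),
      xuH (m+1) κ f (x ∘ σ) = xuH (m+1) κ f x := by
  have hlast : ∀ (c : Fin (m+1)) (x : Fin (m+1) → ℝ),
      xuH (m+1) κ f (x ∘ Equiv.swap c (Fin.last m)) = xuH (m+1) κ f x := by
    intro c x
    rcases eq_or_ne c (Fin.last m) with h | h
    · subst h
      rw [show x ∘ ⇑(Equiv.swap (Fin.last m) (Fin.last m)) = x by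
        funext k; simp [Equiv.swap_self]]
    · obtain ⟨a, rfl⟩ : ∃ a : Fin m, c = Fin.castSucc a :=
        ⟨c.castPred h, by simp⟩
      exact xuH_swap_last m κ f a x
  have hmul : ∀ (σ τ : Equiv.Perm (Fin (m+1))),
      (∀ x, xuH (m+1) κ f (x ∘ σ) = xuH (m+1) κ f x) →
      (∀ x, xuH (m+1) κ f (x ∘ τ) = xuH (m+1) κ f x) →
      ∀ x, xuH (m+1) κ f (x ∘ (σ * τ)) = xuH (m+1) κ f x := by
    intro σ τ hσ hτ x
    rw [show x ∘ ⇑(σ * τ) = (x ∘ σ) ∘ τ by funext k; simp [Equiv.Perm.mul_apply]]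
    rw [hτ, hσ]
  have hswap : ∀ (c d : Fin (m+1)) (x : Fin (m+1) → ℝ),
      xuH (m+1) κ f (x ∘ Equiv.swap c d) = xuH (m+1) κ f x := by
    intro c d x
    rcases eq_or_ne d (Fin.last m) with hd | hd
    · subst hd; exact hlast c x
    rcases eq_or_ne c (Fin.last m) with hc | hc
    · subst hc; rw [Equiv.swap_comm]; exact hlast d x
    rcases eq_or_ne c d with hcd | hcd
    · subst hcd
      rw [show x ∘ ⇑(Equiv.swap c c) = x by funext k; simp [Equiv.swap_self]]
    · have hdecomp : Equiv.swap c d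
          = Equiv.swap (Fin.last m) d * Equiv.swap c (Fin.last m)
              * Equiv.swap (Fin.last m) d := by
        rw [Equiv.swap_mul_swap_mul_swap hc hcd]
        exact Equiv.swap_comm c d
      rw [hdecomp]
      refine hmul _ _ (hmul _ _ (fun y => ?_) (fun y => hlast c y)) (fun y => ?_) x
      · rw [Equiv.swap_comm]; exact hlast d y
      · rw [Equiv.swap_comm]; exact hlast d y
  intro σ
  refine Equiv.Perm.swap_induction_on σ ?_ ?_
  · intro x
    rw [show x ∘ ⇑(1 : Equiv.Perm (Fin (m+1))) = x by funext k; simp]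
  · intro g c d hcd ih x
    exact hmul _ _ (fun y => hswap c d y) ih x

section Deriv

variable {m : ℕ}

lemma tExt_measurable (m : ℕ) (j : Fin (m+1)) :
    Measurable (fun t : Fin (m+1-1) → ℝ => tExt (m+1) t j) := by
  by_cases h : (j : ℕ) < m + 1 - 1
  · simp only [tExt, dif_pos h]
    exact measurable_pi_apply _
  · simp only [tExt, dif_neg h]
    fun_prop

lemma W_measurable (m : ℕ) (κ : ℝ) :
    Measurable (fun t : Fin (m+1-1) → ℝ => ∏ j, (tExt (m+1) t j) ^ (κ - 1)) := by
  have hr : Measurable fun y : ℝ => y ^ (κ - 1) := by fun_prop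
  exact Finset.measurable_prod _ (fun j _ => hr.comp (tExt_measurable m j))

lemma W_pos {m : ℕ} {κ : ℝ} {t : Fin (m+1-1) → ℝ} (ht : t ∈ unitSimplex m) :
    0 < ∏ j, (tExt (m+1) t j) ^ (κ - 1) :=
  Finset.prod_pos fun j _ => Real.rpow_pos_of_pos (tExt_pos ht j) _

lemma S_abs_le {m : ℕ} {t : Fin (m+1-1) → ℝ} (ht : t ∈ unitSimplex m)
    (v : Fin (m+1) → ℝ) : |∑ j, v j * tExt (m+1) t j| ≤ ‖v‖ := by
  calc |∑ j, v j * tExt (m+1) t j| ≤ ∑ j, |v j * tExt (m+1) t j| :=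
        Finset.abs_sum_le_sum_abs _ _
    _ ≤ ∑ j, ‖v‖ * tExt (m+1) t j := by
        refine Finset.sum_le_sum fun j _ => ?_
        rw [abs_mul, abs_of_pos (tExt_pos ht j)]
        exact mul_le_mul_of_nonneg_right (by simpa using norm_le_pi_norm v j)
          (tExt_pos ht j).le
    _ = ‖v‖ := by rw [← Finset.mul_sum, tExt_sum]; ring

lemma xuH_hasFDerivAt (m : ℕ) {κ : ℝ} (hκ : 0 < κ) (f : ℝ → ℝ) (hf : ContDiff ℝ 1 f)
    (x : Fin (m+1) → ℝ) :
    ∃ Φ : (Fin (m+1) → ℝ) →L[ℝ] ℝ, HasFDerivAt (xuH (m+1) κ f) Φ x ∧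
      ∀ i : Fin (m+1), Φ (Pi.single i 1) =
        (Nat.factorial (m+1) : ℝ) * (Real.Gamma ((m+1 : ℕ) * κ) / (Real.Gamma κ) ^ (m+1)) *
          ∫ t in unitSimplex (m+1-1),
            deriv f (∑ j, x j * tExt (m+1) t j) * tExt (m+1) t i *
              ∏ j, (tExt (m+1) t j) ^ (κ - 1) := by
  classical
  set μ := (volume : Measure (Fin (m+1-1) → ℝ)).restrict (unitSimplex (m+1-1)) with hμ
  set W : (Fin (m+1-1) → ℝ) → ℝ := fun t => ∏ j, (tExt (m+1) t j) ^ (κ - 1) with hW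
  set S : (Fin (m+1) → ℝ) → (Fin (m+1-1) → ℝ) → ℝ :=
    fun y t => ∑ j, y j * tExt (m+1) t j with hS
  set F : (Fin (m+1) → ℝ) → (Fin (m+1-1) → ℝ) → ℝ := fun y t => f (S y t) * W t with hF
  set Lmap : (Fin (m+1-1) → ℝ) → (Fin (m+1) → ℝ) →L[ℝ] ℝ :=
    fun t => ∑ j, (tExt (m+1) t j) • (ContinuousLinearMap.proj j) with hLmap
  have hLapp : ∀ t v, Lmap t v = ∑ j, tExt (m+1) t j * v j := by
    intro t v
    simp [hLmap, ContinuousLinearMap.sum_apply]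
  have hLS : ∀ y t, Lmap t y = S y t := by
    intro y t
    rw [hLapp]
    exact Finset.sum_congr rfl fun j _ => mul_comm _ _
  set F' : (Fin (m+1-1) → ℝ) → (Fin (m+1) → ℝ) →L[ℝ] ℝ :=
    fun t => W t • ((deriv f (S x t)) • Lmap t) with hF'
  -- bounds
  set R : ℝ := ‖x‖ + 1 with hR
  obtain ⟨C₀, hC₀⟩ := (isCompact_Icc (a := -R) (b := R)).exists_bound_of_continuousOn
    hf.continuous.continuousOn
  obtain ⟨C₁, hC₁⟩ := (isCompact_Icc (a := -R) (b := R)).exists_bound_of_continuousOn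
    (hf.continuous_deriv le_rfl).continuousOn
  have hC₁0 : 0 ≤ C₁ := le_trans (norm_nonneg _) (hC₁ 0 (by constructor <;> [linarith [norm_nonneg x]; linarith [norm_nonneg x]]))
  have hmemS : ∀ y ∈ Metric.ball x 1, ∀ {t : Fin (m+1-1) → ℝ}, t ∈ unitSimplex m →
      S y t ∈ Set.Icc (-R) R := by
    intro y hy t ht
    have h1 : ‖y‖ ≤ R := by
      have := norm_sub_norm_le y x
      rw [Metric.mem_ball, dist_eq_norm] at hy
      simp only [hR]; linarith
    have := S_abs_le ht y
    rw [Set.mem_Icc]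
    constructor <;> [linarith [abs_le.1 (this.trans h1)]; linarith [(abs_le.1 (this.trans h1)).2]]
  have hWint : Integrable W μ := W_integrable m hκ
  -- measurability of F'
  have hSmeas : ∀ y, Measurable (fun t => S y t) := by
    intro y
    simp only [hS]
    exact Finset.measurable_sum _ (fun j _ => (tExt_measurable m j).const_mul _)
  have hF'eq : F' = fun t => ∑ j,
      ((W t * deriv f (S x t)) * tExt (m+1) t j) • (ContinuousLinearMap.proj
        (R := ℝ) (φ := fun _ : Fin (m+1) => ℝ) j) := by
    funext t
    refine ContinuousLinearMap.ext fun v => ?_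
    simp only [hF', ContinuousLinearMap.smul_apply, ContinuousLinearMap.sum_apply,
      ContinuousLinearMap.proj_apply, smul_eq_mul, hLapp]
    rw [Finset.mul_sum, Finset.mul_sum]
    exact Finset.sum_congr rfl fun j _ => by ring
  have hF'meas : AEStronglyMeasurable F' μ := by
    rw [hF'eq]
    refine Finset.aestronglyMeasurable_fun_sum _ fun j _ => ?_
    refine AEStronglyMeasurable.smul_const ?_ _
    exact (((W_measurable m κ).mul
      ((hf.continuous_deriv le_rfl).measurable.comp (hSmeas x))).mul
      (tExt_measurable m j)).aestronglyMeasurable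
  -- a.e. statements
  have hFmeas : ∀ᶠ y in nhds x, AEStronglyMeasurable (F y) μ := by
    refine Filter.Eventually.of_forall fun y => ?_
    exact ((hf.continuous.measurable.comp (hSmeas y)).mul (W_measurable m κ)).aestronglyMeasurable
  have hFint : Integrable (F x) μ := by
    refine Integrable.mono' (hWint.const_mul ‖C₀‖) ?_ ?_
    · exact ((hf.continuous.measurable.comp (hSmeas x)).mul (W_measurable m κ)).aestronglyMeasurable
    · rw [hμ, ae_restrict_iff' (measurableSet_unitSimplex _)]
      refine Filter.Eventually.of_forall fun t ht => ?_
      have hSx := hmemS x (Metric.mem_ball_self one_pos) ht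
      have h1 : ‖f (S x t)‖ ≤ ‖C₀‖ :=
        le_trans (hC₀ _ hSx) (le_abs_self C₀)
      simp only [hF, Real.norm_eq_abs, abs_mul]
      rw [abs_of_pos (W_pos (m := m) ht)]
      exact mul_le_mul_of_nonneg_right (by simpa [Real.norm_eq_abs] using h1) (W_pos (m := m) ht).le
  have hlip : ∀ᵐ t ∂μ, LipschitzOnWith (Real.nnabs (C₁ * W t)) (fun y => F y t)
      (Metric.ball x 1) := by
    rw [hμ, ae_restrict_iff' (measurableSet_unitSimplex _)]
    refine Filter.Eventually.of_forall fun t ht => ?_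
    rw [lipschitzOnWith_iff_norm_sub_le]
    intro y hy z hz
    have hWpos := W_pos (m := m) (κ := κ) ht
    have hfd : ∀ u ∈ Set.Icc (-R) R, DifferentiableAt ℝ f u :=
      fun u _ => (hf.differentiable one_ne_zero).differentiableAt
    have hmvt := Convex.norm_image_sub_le_of_norm_deriv_le hfd
      (fun u hu => hC₁ u hu) (convex_Icc _ _) (hmemS z hz ht) (hmemS y hy ht)
    have hdiff : S y t - S z t = ∑ j, (y - z) j * tExt (m+1) t j := by
      simp only [hS, Pi.sub_apply, sub_mul, Finset.sum_sub_distrib]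
    have h2 : |S y t - S z t| ≤ ‖y - z‖ := by
      rw [hdiff]; exact S_abs_le (m := m) ht (y - z)
    have h3 : ‖F y t - F z t‖ = ‖f (S y t) - f (S z t)‖ * W t := by
      simp only [hF, Real.norm_eq_abs, ← sub_mul, abs_mul, abs_of_pos hWpos]
      exact congrArg _ (abs_of_pos hWpos)
    rw [h3]
    calc ‖f (S y t) - f (S z t)‖ * W t ≤ (C₁ * ‖S y t - S z t‖) * W t := by
          exact mul_le_mul_of_nonneg_right hmvt hWpos.le
      _ ≤ (C₁ * ‖y - z‖) * W t := by
          refine mul_le_mul_of_nonneg_right ?_ hWpos.le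
          exact mul_le_mul_of_nonneg_left (by simpa [Real.norm_eq_abs] using h2) hC₁0
      _ ≤ ↑(Real.nnabs (C₁ * W t)) * ‖y - z‖ := by
          rw [Real.coe_nnabs, abs_of_nonneg (mul_nonneg hC₁0 hWpos.le)]
          exact le_of_eq (by ring)
  have hbound : Integrable (fun t => C₁ * W t) μ := hWint.const_mul _
  have hdiffF : ∀ᵐ t ∂μ, HasFDerivAt (fun y => F y t) (F' t) x := by
    refine Filter.Eventually.of_forall fun t => ?_
    have h1 : HasFDerivAt (fun y => S y t) (Lmap t) x := by
      have := (Lmap t).hasFDerivAt (x := x)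
      refine this.congr_fderiv rfl |>.congr_of_eventuallyEq ?_
      exact Filter.Eventually.of_forall fun y => (hLS y t).symm
    have h2 : HasDerivAt f (deriv f (S x t)) (S x t) :=
      ((hf.differentiable one_ne_zero).differentiableAt).hasDerivAt
    have h3 := h2.comp_hasFDerivAt x h1
    exact h3.mul_const (W t)
  have main := hasFDerivAt_integral_of_dominated_loc_of_lip
    (F := F) (F' := F') (bound := fun t => C₁ * W t) (μ := μ) (x₀ := x)
    (Metric.ball_mem_nhds x one_pos) hFmeas hFint hF'meas hlip hbound hdiffF
  obtain ⟨hF'int, hHasF⟩ := main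
  set c : ℝ := (Nat.factorial (m+1) : ℝ) * (Real.Gamma ((m+1 : ℕ) * κ) / (Real.Gamma κ) ^ (m+1))
    with hc
  refine ⟨c • (∫ t, F' t ∂μ), ?_, ?_⟩
  · have := hHasF.const_mul c
    exact this
  · intro i
    rw [ContinuousLinearMap.smul_apply, ContinuousLinearMap.integral_apply hF'int]
    rw [smul_eq_mul, hc]
    congr 1
    refine setIntegral_congr_fun (measurableSet_unitSimplex _) fun t ht => ?_
    have h1 : Lmap t (Pi.single i 1) = tExt (m+1) t i := by
      rw [hLapp]
      rw [Finset.sum_eq_single i]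
      · simp
      · intro b _ hb; simp [Pi.single_eq_of_ne hb]
      · intro h; exact absurd (Finset.mem_univ i) h
    simp only [hF', ContinuousLinearMap.smul_apply, smul_eq_mul, h1]
    ring

end Deriv

end Aux

/-- `H` is symmetric under all permutations of the coordinates, and its
`i`-th partial derivative is
`∂_i H(x) = n! c_κ ∫_{T^{n-1}} f'(∑ xⱼtⱼ) t_i ∏ tⱼ^{κ-1} dt`. -/
theorem symmetric_intertwining (n : ℕ) (hn : 2 ≤ n) (κ : ℝ) (hκ : 0 < κ)
    (f : ℝ → ℝ) (hf : ContDiff ℝ 1 f) :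
    (∀ (σ : Equiv.Perm (Fin n)) (x : Fin n → ℝ), xuH n κ f (x ∘ σ) = xuH n κ f x) ∧
      ∀ (i : Fin n) (x : Fin n → ℝ),
        fderiv ℝ (xuH n κ f) x (Pi.single i 1) =
          (n.factorial : ℝ) * (Real.Gamma ((n : ℝ) * κ) / (Real.Gamma κ) ^ n) *
            ∫ t in unitSimplex (n - 1),
              deriv f (∑ j, x j * tExt n t j) * tExt n t i *
                ∏ j, (tExt n t j) ^ (κ - 1) := by
  obtain ⟨m, rfl⟩ : ∃ m, n = m + 1 := ⟨n - 1, by omega⟩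
  constructor
  · exact xuH_perm m κ f
  · intro i x
    obtain ⟨Φ, hΦ, happ⟩ := xuH_hasFDerivAt m hκ f hf x
    rw [hΦ.fderiv]
    exact happ i
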